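/- Let q be a prime power, h ∈ F_q[x], and d, r positive integers with d dividing q - 1. Then f(x) := x^r · h(x^{(q-1)/d}) permutes F_q if and only if gcd(r, (q-1)/d) = 1 and the map x ↦ x^r · h(x)^{(q-1)/d} permutes the set μ_d of d-th roots of unity in F_q. -/

import Mathlib

section Aux

variable {F : Type*} [Field F] [Fintype F]

lemma aux_pow_surj {d s : ℕ} (hds : d * s = Fintype.card F - 1) (hd : 0 < d) (hs : 0 < s)
    {c : F} (hc : c ≠ 0) (hcd : c ^ d = 1) : ∃ x : F, x ≠ 0 ∧ x ^ s = c := by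
  obtain ⟨g, hg⟩ := IsCyclic.exists_generator (α := Fˣ)
  have horder : orderOf g = d * s := by
    classical
    rw [orderOf_eq_card_of_forall_mem_zpowers hg, Nat.card_eq_fintype_card,
      Fintype.card_units, hds]
  set u : Fˣ := Units.mk0 c hc with hu
  obtain ⟨k, hk⟩ := mem_powers_iff_mem_zpowers.mpr (hg u)
  simp only [] at hk
  have hk' : g ^ k = u := hk
  have hud : u ^ d = 1 := by
    ext
    push_cast
    simpa [hu] using hcd
  have hdvd : orderOf g ∣ k * d := by
    rw [orderOf_dvd_iff_pow_eq_one, pow_mul, hk', hud]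
  rw [horder] at hdvd
  have hsk : s ∣ k := by
    have : d * s ∣ d * k := by
      rw [mul_comm d k]; exact hdvd
    exact (mul_dvd_mul_iff_left hd.ne').mp this
  obtain ⟨m, rfl⟩ := hsk
  refine ⟨((g ^ m : Fˣ) : F), Units.ne_zero _, ?_⟩
  have h2 : (g ^ m) ^ s = u := by rw [← hk', ← pow_mul, mul_comm m s]
  calc ((g ^ m : Fˣ) : F) ^ s = (((g ^ m) ^ s : Fˣ) : F) := by push_cast; ring
    _ = c := by rw [h2, hu]; rfl

lemma aux_exists_ne_one {t : ℕ} (ht : t ∣ Fintype.card F - 1) (ht1 : 1 < t) :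
    ∃ u : F, u ≠ 1 ∧ u ^ t = 1 := by
  obtain ⟨g, hg⟩ := IsCyclic.exists_generator (α := Fˣ)
  have h1 : 0 < Fintype.card F - 1 := by
    have := Fintype.one_lt_card_iff_nontrivial.mpr (inferInstance : Nontrivial F)
    omega
  have horder : orderOf g = Fintype.card F - 1 := by
    classical
    rw [orderOf_eq_card_of_forall_mem_zpowers hg, Nat.card_eq_fintype_card, Fintype.card_units]
  set n := Fintype.card F - 1
  set k := n / t with hk
  have hkt : k * t = n := Nat.div_mul_cancel ht
  have hk0 : 0 < k := by
    rcases Nat.eq_zero_or_pos k with h | h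
    · rw [h] at hkt; omega
    · exact h
  have hkn : k < n := by nlinarith [hkt]
  refine ⟨((g ^ k : Fˣ) : F), ?_, ?_⟩
  · intro hcon
    have h2 : g ^ k = 1 := by ext; push_cast; simpa using hcon
    have h3 := orderOf_dvd_iff_pow_eq_one.mpr h2
    rw [horder] at h3
    have := Nat.le_of_dvd hk0 h3
    omega
  · have h2 : (g ^ k) ^ t = 1 := by
      rw [← pow_mul, hkt, ← horder, pow_orderOf_eq_one]
    calc ((g ^ k : Fˣ) : F) ^ t = (((g ^ k) ^ t : Fˣ) : F) := by push_cast; ring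
      _ = 1 := by rw [h2]; rfl

lemma aux_gcd {r s : ℕ} (hr : 0 < r) (hs : s ∣ Fintype.card F - 1)
    (H : ∀ u : F, u ^ s = 1 → u ^ r = 1 → u = 1) : Nat.gcd r s = 1 := by
  by_contra hne
  set t := Nat.gcd r s with hts
  have ht0 : 0 < t := Nat.gcd_pos_of_pos_left s hr
  have ht1 : 1 < t := by omega
  obtain ⟨u, hu1, hut⟩ := aux_exists_ne_one ((Nat.gcd_dvd_right r s).trans hs) ht1
  apply hu1
  apply H u
  · obtain ⟨m, hm⟩ := Nat.gcd_dvd_right r s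
    rw [hm, pow_mul, hut, one_pow]
  · obtain ⟨m, hm⟩ := Nat.gcd_dvd_left r s
    rw [hm, pow_mul, hut, one_pow]

end Aux

theorem stmt_4 (p e q : ℕ) (hp : p.Prime) (he : 0 < e) (hq : q = p ^ e)
    (F : Type*) [Field F] [Fintype F] (hF : Fintype.card F = q)
    (h : Polynomial F) (d r : ℕ) (hd : 0 < d) (hr : 0 < r) (hdvd : d ∣ q - 1) :
    Function.Bijective (fun x : F => x ^ r * h.eval (x ^ ((q - 1) / d))) ↔
      (Nat.gcd r ((q - 1) / d) = 1 ∧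
        Set.BijOn (fun x : F => x ^ r * h.eval x ^ ((q - 1) / d))
          {x : F | x ^ d = 1} {x : F | x ^ d = 1}) := by
  have hq2 : 2 ≤ q := by
    rw [hq]; exact Nat.one_lt_pow he.ne' hp.one_lt
  set s := (q - 1) / d with hs
  have hds : d * s = q - 1 := Nat.mul_div_cancel' hdvd
  have hq1 : 0 < q - 1 := by omega
  have hs0 : 0 < s := by
    rcases Nat.eq_zero_or_pos s with h0 | h0
    · rw [h0, mul_zero] at hds; omega
    · exact h0
  set f : F → F := fun x => x ^ r * h.eval (x ^ s) with hf
  set g : F → F := fun x => x ^ r * h.eval x ^ s with hg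
  have hcard : Fintype.card F - 1 = q - 1 := by rw [hF]
  have hsdvd : s ∣ Fintype.card F - 1 := by
    rw [hcard]; exact Dvd.intro_left d hds
  have hpow1 : ∀ x : F, x ≠ 0 → x ^ (q - 1) = 1 := by
    intro x hx
    rw [← hF]
    exact FiniteField.pow_card_sub_one_eq_one x hx
  have hf0 : f 0 = 0 := by simp [hf, zero_pow hr.ne']
  have key : ∀ x : F, (f x) ^ s = g (x ^ s) := by
    intro x
    simp only [hf, hg, mul_pow, ← pow_mul, mul_comm r s]
  have hsd : ∀ x : F, x ≠ 0 → (x ^ s) ^ d = 1 := by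
    intro x hx
    rw [← pow_mul, mul_comm s d, hds]
    exact hpow1 x hx
  have hmu_ne : ∀ c : F, c ^ d = 1 → c ≠ 0 := by
    intro c hc hc0
    rw [hc0, zero_pow hd.ne'] at hc
    exact one_ne_zero hc.symm
  constructor
  · intro hbij
    have hnz : ∀ x : F, x ≠ 0 → f x ≠ 0 := by
      intro x hx hcon
      exact hx (hbij.1 (by rw [hcon, hf0]))
    have hne : ∀ c : F, c ^ d = 1 → h.eval c ≠ 0 := by
      intro c hc
      obtain ⟨x, hx0, hxs⟩ := aux_pow_surj (hcard ▸ hds) hd hs0 (hmu_ne c hc) hc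
      intro hcon
      apply hnz x hx0
      simp [hf, hxs, hcon]
    refine ⟨?_, ?_⟩
    · apply aux_gcd hr hsdvd
      intro u hus hur
      apply hbij.1
      show f u = f 1
      simp only [hf, hus, hur, one_pow, Polynomial.eval_one]
    · have hmaps : Set.MapsTo g {x : F | x ^ d = 1} {x : F | x ^ d = 1} := by
        intro c hc
        simp only [Set.mem_setOf_eq] at hc ⊢
        obtain ⟨x, hx0, hxs⟩ := aux_pow_surj (hcard ▸ hds) hd hs0 (hmu_ne c hc) hc
        rw [← hxs, ← key x]
        exact hsd _ (hnz x hx0)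
      have hsurj : Set.SurjOn g {x : F | x ^ d = 1} {x : F | x ^ d = 1} := by
        intro b hb
        simp only [Set.mem_setOf_eq] at hb
        obtain ⟨y, hy0, hys⟩ := aux_pow_surj (hcard ▸ hds) hd hs0 (hmu_ne b hb) hb
        obtain ⟨x, hxy⟩ := hbij.2 y
        have hx0 : x ≠ 0 := by
          intro h0; rw [h0, hf0] at hxy; exact hy0 hxy.symm
        refine ⟨x ^ s, hsd x hx0, ?_⟩
        rw [← key x, hxy, hys]
      exact ((Set.Finite.surjOn_iff_bijOn_of_mapsTo (Set.toFinite _) hmaps).mp hsurj)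
  · rintro ⟨hgcd, hbijOn⟩
    have hne : ∀ c : F, c ^ d = 1 → h.eval c ≠ 0 := by
      intro c hc hcon
      have h1 : g c ∈ {x : F | x ^ d = 1} := hbijOn.mapsTo hc
      simp only [Set.mem_setOf_eq] at h1
      rw [hg] at h1
      simp only [hcon, zero_pow hs0.ne', mul_zero, zero_pow hd.ne'] at h1
      exact one_ne_zero h1.symm
    have hnz : ∀ x : F, x ≠ 0 → f x ≠ 0 := by
      intro x hx
      simp only [hf]
      exact mul_ne_zero (pow_ne_zero _ hx) (hne _ (hsd x hx))
    rw [← Finite.injective_iff_bijective]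
    intro x y hxy
    rcases eq_or_ne x 0 with rfl | hx0
    · by_contra hy
      exact hnz y (Ne.symm hy) (by rw [← hxy, hf0])
    rcases eq_or_ne y 0 with rfl | hy0
    · exact absurd (hxy.trans hf0) (hnz x hx0)
    have hc : x ^ s = y ^ s := by
      apply hbijOn.injOn (hsd x hx0) (hsd y hy0)
      rw [← key x, ← key y, hxy]
    have hxr : x ^ r = y ^ r := by
      have h1 : x ^ r * h.eval (x ^ s) = y ^ r * h.eval (x ^ s) := by
        have := hxy
        simp only [hf] at this
        rw [this, hc]
      exact mul_right_cancel₀ (hne _ (hsd x hx0)) h1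
    have hu : (x * y⁻¹) ^ Nat.gcd r s = 1 := by
      refine pow_gcd_eq_one.mpr ⟨?_, ?_⟩
      · rw [mul_pow, hxr, inv_pow, mul_inv_eq_one₀ (pow_ne_zero _ hy0)]
      · rw [mul_pow, hc, inv_pow, mul_inv_eq_one₀ (pow_ne_zero _ hy0)]
    rw [hgcd, pow_one, mul_inv_eq_one₀ hy0] at hu
    exact hu
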